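/- arXiv:1002.3026 — 4 statements merged into one kernel-verified Lean document; each statement's English description precedes it below -/
import Mathlib

section
/- With the Gaeta–Diesel setup below, if i ∈ B̄ (i.e. 3 ≤ i ≤ 2n+1 and θ ≤ d_i + d_{2n+4−i}), then ν_{d_i} = e(d_i); in other words, the number of indices j with d_j = d_i equals −Δ²H(d_i). (Part a) of Proposition 1.7 of the paper.) -/
/-- Proposition 1.7 a): with the Gaeta–Diesel setup, if `i ∈ B̄`
(i.e. `3 ≤ i ≤ 2n+1` and `θ ≤ d i + d (2n+4-i)`), then the number of
indices `j` with `d j = d i` equals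
`e(d i) = #{j : d j ≤ d i} - #{j : θ - d j ≤ d i} - 1 (= -Δ²H(d i))`. -/
theorem stmt_1 (n : ℕ) (hn : 1 ≤ n) (d : ℕ → ℤ) (θ : ℤ)
    (hpos : ∀ j, 1 ≤ j → j ≤ 2 * n + 1 → 0 < d j)
    (hθpos : 0 < θ)
    (hmono : ∀ j k, 1 ≤ j → j ≤ k → k ≤ 2 * n + 1 → d j ≤ d k)
    (hsum : (n : ℤ) * θ = ∑ j ∈ Finset.Icc 1 (2 * n + 1), d j)
    (hGD : ∀ i, 1 ≤ i → i ≤ n → d (i + 1) + d (2 * n + 2 - i) < θ)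
    (i : ℕ) (hi3 : 3 ≤ i) (hi : i ≤ 2 * n + 1)
    (hiB : θ ≤ d i + d (2 * n + 4 - i)) :
    (((Finset.Icc 1 (2 * n + 1)).filter (fun j => d j = d i)).card : ℤ) =
      (((Finset.Icc 1 (2 * n + 1)).filter (fun j => d j ≤ d i)).card : ℤ) -
        (((Finset.Icc 1 (2 * n + 1)).filter (fun j => θ - d j ≤ d i)).card : ℤ) - 1 := by
  set t := d i with ht
  -- the set of indices where d takes value t, and its minimum m
  set S : Finset ℕ := (Finset.Icc 1 (2 * n + 1)).filter (fun j => d j = t) with hS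
  have hiS : i ∈ S := by
    simp [hS, Finset.mem_filter, Finset.mem_Icc]
    omega
  have hSne : S.Nonempty := ⟨i, hiS⟩
  set m := S.min' hSne with hm
  have hmS : m ∈ S := S.min'_mem hSne
  have hmi : m ≤ i := S.min'_le i hiS
  obtain ⟨hmIcc, hdm⟩ := Finset.mem_filter.mp hmS
  rw [Finset.mem_Icc] at hmIcc
  have hm1 : 1 ≤ m := hmIcc.1
  have hm2 : m ≤ 2 * n + 1 := hmIcc.2
  have hmin : ∀ j, 1 ≤ j → j < m → d j ≠ t := by
    intro j hj1 hjm hdj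
    have : m ≤ j := S.min'_le j (by simp [hS, Finset.mem_filter, Finset.mem_Icc]; omega)
    omega
  -- d 2 < t
  have hd2 : d 2 < t := by
    by_contra h
    push_neg at h
    have h2i : d 2 ≤ t := hmono 2 i (by omega) (by omega) hi
    have h2t : d 2 = t := le_antisymm h2i h
    have hle : d (2 * n + 4 - i) ≤ d (2 * n + 1) :=
      hmono (2 * n + 4 - i) (2 * n + 1) (by omega) (by omega) (by omega)
    have hg := hGD 1 le_rfl hn
    have : 2 * n + 2 - 1 = 2 * n + 1 := by omega
    rw [this] at hg
    have : (1 : ℕ) + 1 = 2 := by omega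
    rw [this] at hg
    linarith
  have hm3 : 3 ≤ m := by
    by_contra h
    push_neg at h
    have : d m ≤ d 2 := hmono m 2 hm1 (by omega) (by omega)
    omega
  -- key inequality: d m + d (2n+3-m) < θ
  have hkey : d m + d (2 * n + 3 - m) < θ := by
    rcases le_or_gt m (n + 1) with hc | hc
    · have hg := hGD (m - 1) (by omega) (by omega)
      have e1 : m - 1 + 1 = m := by omega
      have e2 : 2 * n + 2 - (m - 1) = 2 * n + 3 - m := by omega
      rw [e1, e2] at hg
      exact hg
    · have hg := hGD (2 * n + 2 - m) (by omega) (by omega)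
      have e1 : 2 * n + 2 - m + 1 = 2 * n + 3 - m := by omega
      have e2 : 2 * n + 2 - (2 * n + 2 - m) = m := by omega
      rw [e1, e2] at hg
      linarith
  -- filter (d j < t) = Icc 1 (m-1)
  have hL : (Finset.Icc 1 (2 * n + 1)).filter (fun j => d j < t) = Finset.Icc 1 (m - 1) := by
    ext j
    simp only [Finset.mem_filter, Finset.mem_Icc]
    constructor
    · rintro ⟨⟨hj1, hj2⟩, hjt⟩
      refine ⟨hj1, ?_⟩
      by_contra h
      push_neg at h
      have : d m ≤ d j := hmono m j hm1 (by omega) hj2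
      omega
    · rintro ⟨hj1, hj2⟩
      have hjm : j < m := by omega
      have h1 : d j ≤ d m := hmono j m hj1 (by omega) hm2
      have h2 : d j ≠ t := hmin j hj1 hjm
      exact ⟨⟨hj1, by omega⟩, by omega⟩
  -- filter (θ - d j ≤ t) = Icc (2n+4-m) (2n+1)
  have hU : (Finset.Icc 1 (2 * n + 1)).filter (fun j => θ - d j ≤ t)
      = Finset.Icc (2 * n + 4 - m) (2 * n + 1) := by
    ext j
    simp only [Finset.mem_filter, Finset.mem_Icc]
    constructor
    · rintro ⟨⟨hj1, hj2⟩, hjt⟩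
      refine ⟨?_, hj2⟩
      by_contra h
      push_neg at h
      have hle : d j ≤ d (2 * n + 3 - m) := hmono j (2 * n + 3 - m) hj1 (by omega) (by omega)
      have : d m = t := hdm
      omega
    · rintro ⟨hj1, hj2⟩
      have h1 : d (2 * n + 4 - i) ≤ d (2 * n + 4 - m) :=
        hmono (2 * n + 4 - i) (2 * n + 4 - m) (by omega) (by omega) (by omega)
      have h2 : d (2 * n + 4 - m) ≤ d j := hmono (2 * n + 4 - m) j (by omega) hj1 hj2
      exact ⟨⟨by omega, hj2⟩, by omega⟩
  -- filter (d j ≤ t) splits as (d j < t) ∪ (d j = t)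
  have hsplit : (Finset.Icc 1 (2 * n + 1)).filter (fun j => d j ≤ t)
      = (Finset.Icc 1 (2 * n + 1)).filter (fun j => d j < t) ∪ S := by
    rw [hS, ← Finset.filter_or]
    apply Finset.filter_congr
    intro j _
    constructor
    · intro h; exact lt_or_eq_of_le h
    · rintro (h | h) <;> omega
  have hdisj : Disjoint ((Finset.Icc 1 (2 * n + 1)).filter (fun j => d j < t)) S := by
    rw [Finset.disjoint_left]
    intro j hj1 hj2
    rw [hS, Finset.mem_filter] at hj2
    rw [Finset.mem_filter] at hj1
    omega
  have hcardA : ((Finset.Icc 1 (2 * n + 1)).filter (fun j => d j ≤ t)).card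
      = ((Finset.Icc 1 (2 * n + 1)).filter (fun j => d j < t)).card + S.card := by
    rw [hsplit, Finset.card_union_of_disjoint hdisj]
  have hcardL : ((Finset.Icc 1 (2 * n + 1)).filter (fun j => d j < t)).card = m - 1 := by
    rw [hL, Nat.card_Icc]; omega
  have hcardU : ((Finset.Icc 1 (2 * n + 1)).filter (fun j => θ - d j ≤ t)).card = m - 2 := by
    rw [hU, Nat.card_Icc]; omega
  rw [← hS] at *
  rw [hcardU, hcardA, hcardL]
  push_cast
  omega
end

section
/- With the Gaeta–Diesel setup below, if i ∈ C (i.e. 4 ≤ i ≤ n+2 and θ ≤ d_i + d_{2n+5−i}), i ∉ B̄ and i−1 ∉ B̄, then ν_{d_i} = e(d_i) − 1; in other words, the number of indices j with d_j = d_i equals −Δ²H(d_i) − 1. (Part b) of Proposition 1.7 of the paper.) -/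
/-- Proposition 1.7 b): with the Gaeta–Diesel setup, if `i ∈ C`
(i.e. `4 ≤ i ≤ n+2` and `θ ≤ d i + d (2n+5-i)`), `i ∉ B̄` and `i-1 ∉ B̄`,
then the number of indices `j` with `d j = d i` equals `e(d i) - 1`. -/
theorem stmt_2 (n : ℕ) (hn : 1 ≤ n) (d : ℕ → ℤ) (θ : ℤ)
    (hpos : ∀ j, 1 ≤ j → j ≤ 2 * n + 1 → 0 < d j)
    (hθpos : 0 < θ)
    (hmono : ∀ j k, 1 ≤ j → j ≤ k → k ≤ 2 * n + 1 → d j ≤ d k)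
    (hsum : (n : ℤ) * θ = ∑ j ∈ Finset.Icc 1 (2 * n + 1), d j)
    (hGD : ∀ i, 1 ≤ i → i ≤ n → d (i + 1) + d (2 * n + 2 - i) < θ)
    (i : ℕ) (hi4 : 4 ≤ i) (hi : i ≤ n + 2)
    (hiC : θ ≤ d i + d (2 * n + 5 - i))
    (hiB : ¬ (3 ≤ i ∧ i ≤ 2 * n + 1 ∧ θ ≤ d i + d (2 * n + 4 - i)))
    (hiB' : ¬ (3 ≤ i - 1 ∧ i - 1 ≤ 2 * n + 1 ∧ θ ≤ d (i - 1) + d (2 * n + 4 - (i - 1)))) :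
    (((Finset.Icc 1 (2 * n + 1)).filter (fun j => d j = d i)).card : ℤ) =
      ((((Finset.Icc 1 (2 * n + 1)).filter (fun j => d j ≤ d i)).card : ℤ) -
        (((Finset.Icc 1 (2 * n + 1)).filter (fun j => θ - d j ≤ d i)).card : ℤ) - 1) - 1 := by
  have hi2n : i ≤ 2 * n + 1 := by omega
  have h1 : d i + d (2 * n + 4 - i) < θ := by
    by_contra h
    push_neg at h
    exact hiB ⟨by omega, hi2n, h⟩
  have h2 : d (i - 1) + d (2 * n + 5 - i) < θ := by
    have e : 2 * n + 4 - (i - 1) = 2 * n + 5 - i := by omega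
    by_contra h
    push_neg at h
    exact hiB' ⟨by omega, by omega, by rw [e]; exact h⟩
  have h3 : d (i - 1) < d i := by linarith
  have hL : (Finset.Icc 1 (2 * n + 1)).filter (fun j => d j < d i) = Finset.Icc 1 (i - 1) := by
    ext j
    simp only [Finset.mem_filter, Finset.mem_Icc]
    constructor
    · rintro ⟨⟨hj1, hj2⟩, hjd⟩
      refine ⟨hj1, ?_⟩
      by_contra hc
      push_neg at hc
      have : d i ≤ d j := hmono i j (by omega) (by omega) hj2
      linarith
    · rintro ⟨hj1, hj2⟩
      refine ⟨⟨hj1, by omega⟩, ?_⟩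
      have : d j ≤ d (i - 1) := hmono j (i - 1) hj1 hj2 (by omega)
      linarith
  have hF2 : (Finset.Icc 1 (2 * n + 1)).filter (fun j => θ - d j ≤ d i) =
      Finset.Icc (2 * n + 5 - i) (2 * n + 1) := by
    ext j
    simp only [Finset.mem_filter, Finset.mem_Icc]
    constructor
    · rintro ⟨⟨hj1, hj2⟩, hjd⟩
      refine ⟨?_, hj2⟩
      by_contra hc
      push_neg at hc
      have : d j ≤ d (2 * n + 4 - i) := hmono j (2 * n + 4 - i) hj1 (by omega) (by omega)
      linarith
    · rintro ⟨hj1, hj2⟩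
      have : d (2 * n + 5 - i) ≤ d j := hmono (2 * n + 5 - i) j (by omega) hj1 hj2
      exact ⟨⟨by omega, hj2⟩, by linarith⟩
  have hsplit : ((Finset.Icc 1 (2 * n + 1)).filter (fun j => d j = d i)).card
      + ((Finset.Icc 1 (2 * n + 1)).filter (fun j => d j < d i)).card
      = ((Finset.Icc 1 (2 * n + 1)).filter (fun j => d j ≤ d i)).card := by
    rw [← Finset.card_union_of_disjoint]
    · congr 1
      ext j
      simp only [Finset.mem_union, Finset.mem_filter]
      constructor
      · rintro (⟨h, h'⟩ | ⟨h, h'⟩) <;> exact ⟨h, by omega⟩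
      · rintro ⟨h, h'⟩
        rcases eq_or_lt_of_le h' with h'' | h''
        · exact Or.inl ⟨h, h''⟩
        · exact Or.inr ⟨h, h''⟩
    · rw [Finset.disjoint_left]
      intro j hj hj'
      simp only [Finset.mem_filter] at hj hj'
      omega
  rw [hL] at hsplit
  rw [hF2]
  have c1 : (Finset.Icc 1 (i - 1)).card = i - 1 := by
    rw [Nat.card_Icc]; omega
  have c2 : (Finset.Icc (2 * n + 5 - i) (2 * n + 1)).card = i - 3 := by
    rw [Nat.card_Icc]; omega
  omega
end

section
/- With the Gaeta–Diesel setup below, if i, j ∈ B̄ and d_i = d_j, then i = j; that is, distinct indices in B̄ carry distinct degree values. (Part c) of Proposition 1.7 of the paper.) -/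
lemma key_pair (n : ℕ) (hn : 1 ≤ n) (d : ℕ → ℤ) (θ : ℤ)
    (hmono : ∀ j k, 1 ≤ j → j ≤ k → k ≤ 2 * n + 1 → d j ≤ d k)
    (hGD : ∀ i, 1 ≤ i → i ≤ n → d (i + 1) + d (2 * n + 2 - i) < θ)
    (s t : ℕ) (hs2 : 2 ≤ s) (hs : s ≤ 2 * n + 1) (ht2 : 2 ≤ t)
    (ht : t ≤ 2 * n + 1) (hst : s + t ≤ 2 * n + 3) :
    d s + d t < θ := by
  have htm : d t ≤ d (2 * n + 3 - s) := by
    apply hmono t (2 * n + 3 - s) (by omega) (by omega) (by omega)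
  rcases le_or_gt s (n + 1) with hc | hc
  · have h := hGD (s - 1) (by omega) (by omega)
    have e1 : s - 1 + 1 = s := by omega
    have e2 : 2 * n + 2 - (s - 1) = 2 * n + 3 - s := by omega
    rw [e1, e2] at h
    linarith
  · have h := hGD (2 * n + 2 - s) (by omega) (by omega)
    have e1 : 2 * n + 2 - s + 1 = 2 * n + 3 - s := by omega
    have e2 : 2 * n + 2 - (2 * n + 2 - s) = s := by omega
    rw [e1, e2] at h
    linarith

/-- Proposition 1.7 c): with the Gaeta–Diesel setup, if `i, j ∈ B̄` and
`d i = d j`, then `i = j`. -/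
theorem stmt_3 (n : ℕ) (hn : 1 ≤ n) (d : ℕ → ℤ) (θ : ℤ)
    (hpos : ∀ j, 1 ≤ j → j ≤ 2 * n + 1 → 0 < d j)
    (hθpos : 0 < θ)
    (hmono : ∀ j k, 1 ≤ j → j ≤ k → k ≤ 2 * n + 1 → d j ≤ d k)
    (hsum : (n : ℤ) * θ = ∑ j ∈ Finset.Icc 1 (2 * n + 1), d j)
    (hGD : ∀ i, 1 ≤ i → i ≤ n → d (i + 1) + d (2 * n + 2 - i) < θ)
    (i j : ℕ)
    (hiB : 3 ≤ i ∧ i ≤ 2 * n + 1 ∧ θ ≤ d i + d (2 * n + 4 - i))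
    (hjB : 3 ≤ j ∧ j ≤ 2 * n + 1 ∧ θ ≤ d j + d (2 * n + 4 - j))
    (hij : d i = d j) :
    i = j := by
  obtain ⟨hi3, hi, hiθ⟩ := hiB
  obtain ⟨hj3, hj, hjθ⟩ := hjB
  rcases lt_trichotomy i j with h | h | h
  · exfalso
    have := key_pair n hn d θ hmono hGD i (2 * n + 4 - j) (by omega) (by omega)
      (by omega) (by omega) (by omega)
    linarith
  · exact h
  · exfalso
    have := key_pair n hn d θ hmono hGD j (2 * n + 4 - i) (by omega) (by omega)
      (by omega) (by omega) (by omega)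
    linarith
end

section
/- Let m ≥ 2, let γ_1 ≤ γ_2 ≤ ⋯ ≤ γ_{2m+1} be positive integers and θ a positive integer satisfying the Gaeta–Diesel conditions: mθ = γ_1 + ⋯ + γ_{2m+1} and θ > γ_{i+1} + γ_{2m+2−i} for all 1 ≤ i ≤ m. Suppose that the set B_Γ := {h : 3 ≤ h ≤ m+1 and θ ≤ γ_h + γ_{2m+4−h}} consists of exactly one element b. Then for every index c with b ≤ c ≤ m+1 one has γ_{c+1} < γ_{2m+4−b}. (This is the key combinatorial step in the proof of Lemma 3.5 of the paper, ruling out γ_{c+1} = γ_{2m+4−b} via the forced degeneration c = b = m+1, γ_{m+2} = γ_{m+3}, which contradicts θ > γ_{m+1} + γ_{m+2}.) -/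
/-- Key combinatorial step in the proof of Lemma 3.5: with the Gaeta–Diesel
setup for `γ_1 ≤ ⋯ ≤ γ_{2m+1}` and `θ`, if the set
`B_Γ = {h : 3 ≤ h ≤ m+1, θ ≤ γ h + γ (2m+4-h)}` consists of exactly one
element `b`, then for every `c` with `b ≤ c ≤ m+1` one has
`γ (c+1) < γ (2m+4-b)`. -/
theorem stmt_9 (m : ℕ) (hm : 2 ≤ m) (γ : ℕ → ℤ) (θ : ℤ)
    (hpos : ∀ j, 1 ≤ j → j ≤ 2 * m + 1 → 0 < γ j)
    (hθpos : 0 < θ)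
    (hmono : ∀ j k, 1 ≤ j → j ≤ k → k ≤ 2 * m + 1 → γ j ≤ γ k)
    (hsum : (m : ℤ) * θ = ∑ j ∈ Finset.Icc 1 (2 * m + 1), γ j)
    (hGD : ∀ i, 1 ≤ i → i ≤ m → γ (i + 1) + γ (2 * m + 2 - i) < θ)
    (b : ℕ) (hb3 : 3 ≤ b) (hb : b ≤ m + 1) (hbB : θ ≤ γ b + γ (2 * m + 4 - b))
    (hbuniq : ∀ h, 3 ≤ h → h ≤ m + 1 → θ ≤ γ h + γ (2 * m + 4 - h) → h = b) :
    ∀ c, b ≤ c → c ≤ m + 1 → γ (c + 1) < γ (2 * m + 4 - b) := by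
  intro c hbc hcm
  by_contra hcon
  push_neg at hcon
  -- γ (c+1) ≤ γ (2m+4-b), so equality
  have hle : γ (c + 1) ≤ γ (2 * m + 4 - b) := by
    apply hmono <;> omega
  have heq : γ (c + 1) = γ (2 * m + 4 - b) := le_antisymm hle hcon
  rcases Nat.lt_or_ge c (m + 1) with hc | hc
  · -- case c ≤ m : h = c+1 is also in B, contradicting uniqueness
    have h1 : γ b ≤ γ (2 * m + 4 - b) := by apply hmono <;> omega
    have h2 : γ (c + 1) ≤ γ (2 * m + 3 - c) := by apply hmono <;> omega
    have hB : θ ≤ γ (c + 1) + γ (2 * m + 4 - (c + 1)) := by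
      have : 2 * m + 4 - (c + 1) = 2 * m + 3 - c := by omega
      rw [this]
      calc θ ≤ γ b + γ (2 * m + 4 - b) := hbB
        _ ≤ γ (c + 1) + γ (2 * m + 3 - c) := by
            have := heq ▸ h1
            have := heq ▸ h2
            omega
    have := hbuniq (c + 1) (by omega) (by omega) hB
    omega
  · -- case c = m+1 : contradiction with GD at i = m
    have hc' : c = m + 1 := by omega
    subst hc'
    have h1 : γ b ≤ γ (m + 1) := by apply hmono <;> omega
    have hGDm := hGD m (by omega) le_rfl
    have h2 : 2 * m + 2 - m = m + 2 := by omega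
    rw [h2] at hGDm
    rw [show m + 1 + 1 = m + 2 from rfl] at heq
    -- heq : γ (m+2) = γ (2m+4-b)
    omega
end
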